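/- Let p > τ > 0, r, d, k, M, μ₁, μ₂, q > 0 with r d > μ₁/q. The function V(z) = (p − τ)(r d − μ₁/q) z / (r d k z/M + μ₂) − τ z is strictly concave on [0, ∞), and its unique stationary point is z* = M(−μ₂ + √((p−τ)(r d − μ₁/q) μ₂ / τ)) / (r d k); moreover if (p−τ)(rd − μ₁/q) > τ μ₂ then z* > 0 and z* is the global maximizer of V on [0,∞). -/

import Mathlib

private lemma aux_deriv (A B μ₂ τ : ℝ) (z : ℝ) (hz : B * z + μ₂ ≠ 0) :
    HasDerivAt (fun z => A * z / (B * z + μ₂) - τ * z)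
      (A * μ₂ / (B * z + μ₂) ^ 2 - τ) z := by
  have h1 : HasDerivAt (fun z : ℝ => A * z) A z := by
    simpa using (hasDerivAt_id z).const_mul A
  have h2 : HasDerivAt (fun z : ℝ => B * z + μ₂) B z := by
    simpa using ((hasDerivAt_id z).const_mul B).add_const μ₂
  have h4 : HasDerivAt (fun z : ℝ => τ * z) τ z := by
    simpa using (hasDerivAt_id z).const_mul τ
  have h5 := (h1.div h2 hz).sub h4
  refine h5.congr_deriv ?_
  ring

private lemma aux_main (A B μ₂ τ s : ℝ) (hA : 0 < A) (hB : 0 < B) (hμ₂ : 0 < μ₂)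
    (hτ : 0 < τ) (hs2 : s ^ 2 = A * μ₂ / τ) (hs : 0 < s) :
    StrictConcaveOn ℝ (Set.Ici 0) (fun z => A * z / (B * z + μ₂) - τ * z) ∧
    deriv (fun z => A * z / (B * z + μ₂) - τ * z) ((s - μ₂) / B) = 0 ∧
    (∀ z : ℝ, 0 ≤ z → deriv (fun z => A * z / (B * z + μ₂) - τ * z) z = 0 →
      z = (s - μ₂) / B) ∧
    (τ * μ₂ < A → 0 < (s - μ₂) / B ∧ ∀ z : ℝ, 0 ≤ z →
      A * z / (B * z + μ₂) - τ * z ≤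
        A * ((s - μ₂) / B) / (B * ((s - μ₂) / B) + μ₂) - τ * ((s - μ₂) / B)) := by
  have hA2 : A * μ₂ = τ * s ^ 2 := by rw [hs2]; field_simp
  have hds : B * ((s - μ₂) / B) + μ₂ = s := by field_simp; ring
  have hwpos : ∀ z : ℝ, 0 ≤ z → 0 < B * z + μ₂ := fun z hz => by positivity
  refine ⟨?_, ?_, ?_, ?_⟩
  · refine ⟨convex_Ici 0, fun x hx y hy hxy a b ha hb hab => ?_⟩
    simp only [smul_eq_mul]
    have hx0 : (0:ℝ) ≤ x := hx
    have hy0 : (0:ℝ) ≤ y := hy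
    have hu : 0 < B * x + μ₂ := hwpos x hx0
    have hv : 0 < B * y + μ₂ := hwpos y hy0
    have hm : B * (a * x + b * y) + μ₂ = a * (B * x + μ₂) + b * (B * y + μ₂) := by
      nlinarith [hab]
    have huv : 0 < a * (B * x + μ₂) + b * (B * y + μ₂) := by positivity
    rw [hm]
    have key : a * (A * x / (B * x + μ₂)) + b * (A * y / (B * y + μ₂))
        < A * (a * x + b * y) / (a * (B * x + μ₂) + b * (B * y + μ₂)) := by
      have lhs_eq : a * (A * x / (B * x + μ₂)) + b * (A * y / (B * y + μ₂))
          = (a * (A * x) * (B * y + μ₂) + b * (A * y) * (B * x + μ₂))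
            / ((B * x + μ₂) * (B * y + μ₂)) := by
        field_simp
      rw [lhs_eq, div_lt_div_iff₀ (by positivity) huv]
      have hb' : b = 1 - a := by linarith
      subst hb'
      have hxy2 : 0 < (x - y) ^ 2 := pow_two_pos_of_ne_zero (sub_ne_zero.mpr hxy)
      have hident : A * (a * x + (1 - a) * y) * ((B * x + μ₂) * (B * y + μ₂))
          - (a * (A * x) * (B * y + μ₂) + (1 - a) * (A * y) * (B * x + μ₂))
            * (a * (B * x + μ₂) + (1 - a) * (B * y + μ₂))
          = A * a * (1 - a) * B * μ₂ * (x - y) ^ 2 := by ring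
      nlinarith [mul_pos (mul_pos (mul_pos (mul_pos (mul_pos hA ha) hb) hB) hμ₂) hxy2]
    have expand : a * (A * x / (B * x + μ₂) - τ * x) + b * (A * y / (B * y + μ₂) - τ * y)
        = (a * (A * x / (B * x + μ₂)) + b * (A * y / (B * y + μ₂))) - τ * (a * x + b * y) := by
      ring
    have expand2 : A * (a * x + b * y) / (a * (B * x + μ₂) + b * (B * y + μ₂))
        - τ * (a * x + b * y)
        = A * (a * x + b * y) / (a * (B * x + μ₂) + b * (B * y + μ₂)) - τ * (a * x + b * y) := rfl
    calc a * (A * x / (B * x + μ₂) - τ * x) + b * (A * y / (B * y + μ₂) - τ * y)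
        = (a * (A * x / (B * x + μ₂)) + b * (A * y / (B * y + μ₂))) - τ * (a * x + b * y) := by ring
      _ < A * (a * x + b * y) / (a * (B * x + μ₂) + b * (B * y + μ₂)) - τ * (a * x + b * y) := by
          linarith
  · have hne : B * ((s - μ₂) / B) + μ₂ ≠ 0 := by rw [hds]; exact hs.ne'
    rw [(aux_deriv A B μ₂ τ _ hne).deriv, hds, hs2]
    field_simp
    ring
  · intro z hz h0
    have hw : 0 < B * z + μ₂ := hwpos z hz
    rw [(aux_deriv A B μ₂ τ z hw.ne').deriv] at h0
    have h1 : A * μ₂ = τ * (B * z + μ₂) ^ 2 := by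
      have h2 : A * μ₂ / (B * z + μ₂) ^ 2 = τ := by linarith
      field_simp at h2
      linarith
    have hsq : (B * z + μ₂) ^ 2 = s ^ 2 := by nlinarith [hA2]
    have hweq : B * z + μ₂ = s := by nlinarith [hw, hs]
    field_simp
    linarith
  · intro hgt
    have hμs : μ₂ < s := by
      have hlt : μ₂ ^ 2 < s ^ 2 := by
        rw [hs2, lt_div_iff₀ hτ]
        nlinarith [mul_lt_mul_of_pos_right hgt hμ₂]
      exact lt_of_pow_lt_pow_left₀ 2 hs.le hlt
    refine ⟨div_pos (by linarith) hB, fun z hz => ?_⟩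
    have hw : 0 < B * z + μ₂ := hwpos z hz
    rw [hds]
    have hid : (A * ((s - μ₂) / B) / s - τ * ((s - μ₂) / B))
        - (A * z / (B * z + μ₂) - τ * z)
        = τ * (s - (B * z + μ₂)) ^ 2 / (B * (B * z + μ₂)) := by
      have hw' : (B * z + μ₂) ≠ 0 := hw.ne'
      have hAval : A = τ * s ^ 2 / μ₂ := by
        field_simp
        linarith
      subst hAval
      field_simp
      ring
    nlinarith [hid, div_nonneg (mul_nonneg hτ.le (sq_nonneg (s - (B * z + μ₂))))
      (mul_pos hB hw).le]

/-- The honeypot operator's utility V is strictly concave on [0,∞), z* is its unique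
stationary point, and z* is positive and globally maximizing when
(p−τ)(rd − μ₁/q) > τμ₂. -/
theorem optimal_deployment
    (p τ r d k M μ₁ μ₂ q : ℝ)
    (hpτ : τ < p) (hτ : 0 < τ) (hr : 0 < r) (hd : 0 < d) (hk : 0 < k) (hM : 0 < M)
    (hμ₁ : 0 < μ₁) (hμ₂ : 0 < μ₂) (hq : 0 < q) (hrd : μ₁ / q < r * d) :
    let V : ℝ → ℝ := fun z =>
      (p - τ) * (r * d - μ₁ / q) * z / (r * d * k * z / M + μ₂) - τ * z
    let zstar := M * (-μ₂ + Real.sqrt ((p - τ) * (r * d - μ₁ / q) * μ₂ / τ)) / (r * d * k)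
    StrictConcaveOn ℝ (Set.Ici 0) V ∧
      deriv V zstar = 0 ∧ (∀ z : ℝ, 0 ≤ z → deriv V z = 0 → z = zstar) ∧
      ((p - τ) * (r * d - μ₁ / q) > τ * μ₂ →
        0 < zstar ∧ ∀ z : ℝ, 0 ≤ z → V z ≤ V zstar) := by
  intro V zstar
  have hA : 0 < (p - τ) * (r * d - μ₁ / q) := mul_pos (by linarith) (by linarith)
  have hB : 0 < r * d * k / M := by positivity
  have hVfun : V = fun z => (p - τ) * (r * d - μ₁ / q) * z
      / (r * d * k / M * z + μ₂) - τ * z := by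
    funext z
    have hden : r * d * k * z / M + μ₂ = r * d * k / M * z + μ₂ := by ring
    simp only [V, hden]
  have hs2 : Real.sqrt ((p - τ) * (r * d - μ₁ / q) * μ₂ / τ) ^ 2
      = (p - τ) * (r * d - μ₁ / q) * μ₂ / τ := Real.sq_sqrt (by positivity)
  have hs : 0 < Real.sqrt ((p - τ) * (r * d - μ₁ / q) * μ₂ / τ) :=
    Real.sqrt_pos.mpr (by positivity)
  have hzs : zstar = (Real.sqrt ((p - τ) * (r * d - μ₁ / q) * μ₂ / τ) - μ₂)
      / (r * d * k / M) := by
    simp only [zstar]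
    field_simp
    ring
  obtain ⟨h1, h2, h3, h4⟩ := aux_main ((p - τ) * (r * d - μ₁ / q)) (r * d * k / M) μ₂ τ
    (Real.sqrt ((p - τ) * (r * d - μ₁ / q) * μ₂ / τ)) hA hB hμ₂ hτ hs2 hs
  rw [hVfun, hzs]
  exact ⟨h1, h2, h3, fun hgt => h4 hgt⟩
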